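/- There exist directed graphs A, B on a 6-element vertex set V with A ∩ Bᵀ = I and A ⊆ B, and a non-negative weight function ω, such that for every vertex v, ω(AB(v)) < ω(A(v)) + ω(B(v)) − ω(v). Concretely, take V = {1,…,6}, weights (7,3,11,3,3,9), A given by out-sets A(1)={1,2,5,6}, A(2)={2,3}, A(3)={1,3,4,5}, A(4)={1,4}, A(5)={2,5,6}, A(6)={2,3,6}, and B given by B(1)={1,2,5,6}, B(2)={2,3,4}, B(3)={1,3,4,5}, B(4)={1,4,6}, B(5)={2,4,5,6}, B(6)={2,3,6}. -/

import Mathlib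

open Finset
open scoped Classical
noncomputable section

/-- Out-neighbourhood of `v` in the digraph/relation `A`. -/
def outs {V : Type} [Fintype V] (A : V → V → Prop) (v : V) : Finset V :=
  Finset.univ.filter (fun u => A v u)

/-- In-neighbourhood of `v` in the digraph/relation `A`. -/
def ins {V : Type} [Fintype V] (A : V → V → Prop) (v : V) : Finset V :=
  Finset.univ.filter (fun u => A u v)

/-- Second out-neighbourhood: `(⋃_{u ∈ N⁺(v)} N⁺(u)) \ N⁺(v)`. -/
def souts {V : Type} [Fintype V] (A : V → V → Prop) (v : V) : Finset V :=
  (Finset.univ.filter (fun w => ∃ u, A v u ∧ A u w)) \ outs A v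

/-- Relational product `AB`. -/
def rprod {V : Type} (A B : V → V → Prop) : V → V → Prop :=
  fun u v => ∃ w, A u w ∧ B w v

/-- Transpose of a relation. -/
def tr {V : Type} (A : V → V → Prop) : V → V → Prop := fun u v => A v u

/-- Weight of a finite set of vertices. -/
def wt {V : Type} {M : Type} [AddCommMonoid M] (ω : V → M) (S : Finset V) : M :=
  ∑ x ∈ S, ω x
/-- Out-sets of the first counterexample graph `A` (0-indexed from the paper's table). -/
def aOut4 : Fin 6 → List (Fin 6)
  | 0 => [0,1,4,5] | 1 => [1,2] | 2 => [0,2,3,4] | 3 => [0,3] | 4 => [1,4,5] | 5 => [1,2,5]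

/-- Out-sets of the first counterexample graph `B`. -/
def bOut4 : Fin 6 → List (Fin 6)
  | 0 => [0,1,4,5] | 1 => [1,2,3] | 2 => [0,2,3,4] | 3 => [0,3,5] | 4 => [1,3,4,5] | 5 => [1,2,5]

/-- Weights of the first counterexample. -/
def w4 : Fin 6 → ℝ
  | 0 => 7 | 1 => 3 | 2 => 11 | 3 => 3 | 4 => 3 | 5 => 9

/-- The concrete 6-vertex weighted counterexample with `A ⊆ B`: `A ∩ Bᵀ = I`, `A ⊆ B`,
the weights are non-negative, and every vertex `v` has
`ω(AB(v)) < ω(A(v)) + ω(B(v)) − ω(v)`. -/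
theorem counterexample_A_subset_B :
    ∃ (A B : Fin 6 → Fin 6 → Prop) (ω : Fin 6 → ℝ),
      (∀ u v, A u v ↔ v ∈ aOut4 u) ∧ (∀ u v, B u v ↔ v ∈ bOut4 u) ∧ ω = w4 ∧
      (∀ v, 0 ≤ ω v) ∧
      (∀ u v, (A u v ∧ B v u) ↔ u = v) ∧
      (∀ u v, A u v → B u v) ∧
      (∀ v, wt ω (outs (rprod A B) v) < wt ω (outs A v) + wt ω (outs B v) - ω v) := by
  refine ⟨fun u v => v ∈ aOut4 u, fun u v => v ∈ bOut4 u, w4,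
    fun _ _ => Iff.rfl, fun _ _ => Iff.rfl, rfl, ?_, ?_, ?_, ?_⟩
  · intro v; fin_cases v <;> norm_num [w4]
  · decide
  · decide
  · intro v
    fin_cases v <;>
    · simp only [wt, outs, rprod, Finset.sum_filter, Fin.sum_univ_six]
      norm_num (config := { decide := true }) [aOut4, bOut4, w4, Finset.sum_filter, Fin.sum_univ_six]
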